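/- Let F_q be a finite field, k and m positive integers, F^1, …, F^m full flags on F_q^{2k} with F^j = (F^j_1, …, F^j_{2k−1}), and T a subgroup of GL(2k, q). Suppose that: the subspaces F^1_k, …, F^m_k lie in pairwise different orbits of the action of T; any two distinct subspaces in the union ⋃_{j=1}^m Orb_T(F^j_k) intersect trivially; and Stab_T(F^j_k) ⊆ Stab_T(F^j_i) for all i ∈ {1, …, 2k−1} and all j ∈ {1, …, m}. Then the orbits Orb_T(F^1), …, Orb_T(F^m) are pairwise disjoint, their union C = ⋃_{j=1}^m Orb_T(F^j) has cardinality Σ_{j=1}^m |Orb_T(F^j_k)|, and any two distinct flags in C have flag distance exactly 2k² (so C is an optimum distance full flag code). -/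

import Mathlib

open Module

/-- The action of `A ∈ GL(n, F)` on subspaces of `F^n`: `U · A` is the image of `U`
under the invertible linear map given by the matrix `A`. -/
noncomputable def mapGL {F : Type*} [Field F] {n : ℕ}
    (A : GL (Fin n) F) (U : Submodule F (Fin n → F)) : Submodule F (Fin n → F) :=
  U.map (Matrix.toLin' (A : Matrix (Fin n) (Fin n) F))

/-- The subspace distance `d_S(U, W) = dim U + dim W − 2 dim(U ∩ W)`. -/
noncomputable def subspaceDist {F V : Type*} [Field F] [AddCommGroup V] [Module F V]
    (U W : Submodule F V) : ℕ :=
  finrank F U + finrank F W - 2 * finrank F ↥(U ⊓ W)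

/-- The orbit flag code of a full flag `Fl` (indexed so that `Fl i` has dimension `i` for
`1 ≤ i ≤ 2k−1`) under a subgroup `T ≤ GL(2k, q)`, recorded as a set of
`(2k−1)`-tuples of subspaces. -/
noncomputable def orbFlag {F : Type*} [Field F] [Fintype F] {k : ℕ}
    (T : Subgroup (GL (Fin (2 * k)) F)) (Fl : ℕ → Submodule F (Fin (2 * k) → F)) :
    Set (Fin (2 * k - 1) → Submodule F (Fin (2 * k) → F)) :=
  {G | ∃ A ∈ T, G = fun j => mapGL A (Fl (j.val + 1))}

section helpers
variable {F : Type*} [Field F] {n : ℕ}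

lemma mapGL_mapGL (A B : GL (Fin n) F) (U : Submodule F (Fin n → F)) :
    mapGL A (mapGL B U) = mapGL (A * B) U := by
  simp only [mapGL, Units.val_mul, Matrix.toLin'_mul, Submodule.map_comp]

lemma mapGL_one (U : Submodule F (Fin n → F)) : mapGL (1 : GL (Fin n) F) U = U := by
  simp [mapGL]

lemma inv_val_mul (A : GL (Fin n) F) :
    ((A⁻¹ : GL (Fin n) F) : Matrix (Fin n) (Fin n) F) * (A : Matrix (Fin n) (Fin n) F) = 1 := by
  rw [← Units.val_mul, inv_mul_cancel, Units.val_one]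

lemma toLin'_inj (A : GL (Fin n) F) :
    Function.Injective ⇑(Matrix.toLin' (A : Matrix (Fin n) (Fin n) F)) := by
  intro x y h
  have h2 := congrArg ⇑(Matrix.toLin' ((A⁻¹ : GL (Fin n) F) : Matrix (Fin n) (Fin n) F)) h
  rw [← Matrix.toLin'_mul_apply, ← Matrix.toLin'_mul_apply, inv_val_mul] at h2
  simpa using h2

lemma mapGL_finrank (A : GL (Fin n) F) (U : Submodule F (Fin n → F)) :
    finrank F (mapGL A U) = finrank F U :=
  (LinearEquiv.finrank_eq (Submodule.equivMapOfInjective _ (toLin'_inj A) U)).symm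

lemma mapGL_mono (A : GL (Fin n) F) {U W : Submodule F (Fin n → F)} (h : U ≤ W) :
    mapGL A U ≤ mapGL A W := Submodule.map_mono h

instance submoduleFinite [Fintype F] : Finite (Submodule F (Fin n → F)) := by
  classical
  exact Finite.of_injective (fun U : Submodule F (Fin n → F) => (U : Set (Fin n → F)))
    SetLike.coe_injective
end helpers

lemma sum_two_mul_succ (n : ℕ) : ∑ x ∈ Finset.range n, 2 * (x + 1) = n * (n + 1) := by
  induction n with
  | zero => simp
  | succ n ih => rw [Finset.sum_range_succ, ih]; ring

lemma sum_two_mul_sub (n : ℕ) : ∑ x ∈ Finset.range n, 2 * (n - x) = n * (n + 1) := by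
  rw [← sum_two_mul_succ n, ← Finset.sum_range_reflect (fun x => 2 * (x + 1)) n]
  exact Finset.sum_congr rfl fun x hx => by
    have := Finset.mem_range.mp hx; congr 1; omega

lemma key_sum {k : ℕ} (hk : 0 < k) :
    ∑ i ∈ Finset.range (2 * k - 1),
      (if i + 1 ≤ k then 2 * (i + 1) else 4 * k - 2 * (i + 1)) = 2 * k ^ 2 := by
  have h2k : 2 * k - 1 = k + (k - 1) := by omega
  rw [h2k, Finset.sum_range_add]
  have e1 : ∑ x ∈ Finset.range k,
      (if x + 1 ≤ k then 2 * (x + 1) else 4 * k - 2 * (x + 1)) = k * (k + 1) := by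
    rw [← sum_two_mul_succ k]
    exact Finset.sum_congr rfl fun x hx => by
      have := Finset.mem_range.mp hx; simp [Nat.succ_le_of_lt this]
  have e2 : ∑ x ∈ Finset.range (k - 1),
      (if k + x + 1 ≤ k then 2 * (k + x + 1) else 4 * k - 2 * (k + x + 1))
      = (k - 1) * k := by
    have hcg : ∀ x ∈ Finset.range (k - 1),
        (if k + x + 1 ≤ k then 2 * (k + x + 1) else 4 * k - 2 * (k + x + 1))
        = 2 * ((k - 1) - x) := fun x hx => by
      have := Finset.mem_range.mp hx
      rw [if_neg (by omega)]; omega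
    rw [Finset.sum_congr rfl hcg, sum_two_mul_sub (k - 1)]
    have h1 : k - 1 + 1 = k := by omega
    rw [h1]
  rw [e1, e2]
  obtain ⟨a, rfl⟩ : ∃ a, k = a + 1 := ⟨k - 1, by omega⟩
  simp only [Nat.add_sub_cancel]
  ring

lemma ncard_iUnion_of_disjoint {α ι : Type*} [Fintype ι] (s : ι → Set α)
    (hf : ∀ i, (s i).Finite)
    (hd : ∀ i j, i ≠ j → Disjoint (s i) (s j)) :
    (⋃ i, s i).ncard = ∑ i, (s i).ncard := by
  classical
  have key : ∀ t : Finset ι, (⋃ i ∈ t, s i).ncard = ∑ i ∈ t, (s i).ncard := by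
    intro t
    induction t using Finset.induction_on with
    | empty => simp
    | @insert a t ha ih =>
      have hfin : (⋃ x ∈ t, s x).Finite := by
        apply Set.Finite.biUnion t.finite_toSet
        intro i _; exact hf i
      have hdisj : Disjoint (s a) (⋃ x ∈ t, s x) := by
        simp only [Set.disjoint_iUnion_right]
        exact fun i hi => hd a i (fun h => ha (h ▸ hi))
      rw [Finset.set_biUnion_insert, Set.ncard_union_eq hdisj (hf a) hfin, ih,
        Finset.sum_insert ha]
  have := key Finset.univ
  simpa using this

/-- Let `F^1, …, F^m` be full flags on `F_q^{2k}` and `T ≤ GL(2k, q)` such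
that the middle subspaces `F^j_k` lie in pairwise different `T`-orbits, any two distinct
subspaces in `⋃_j Orb_T(F^j_k)` intersect trivially, and `Stab_T(F^j_k) ⊆ Stab_T(F^j_i)` for
all `i, j`. Then the orbit flag codes `Orb_T(F^j)` are pairwise disjoint, their union has
cardinality `Σ_j |Orb_T(F^j_k)|`, and any two distinct flags in the union are at flag
distance exactly `2k²`. -/
theorem union_orbit_flag_codes_optimum_distance
    {F : Type*} [Field F] [Fintype F] {k m : ℕ} (hk : 0 < k) (hm : 0 < m)
    (Fl : Fin m → ℕ → Submodule F (Fin (2 * k) → F))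
    (hdim : ∀ j i, 1 ≤ i → i ≤ 2 * k - 1 → finrank F (Fl j i) = i)
    (hmono : ∀ j i i', 1 ≤ i → i < i' → i' ≤ 2 * k - 1 → Fl j i < Fl j i')
    (T : Subgroup (GL (Fin (2 * k)) F))
    (horb : ∀ j j' : Fin m, j ≠ j' → ∀ A ∈ T, mapGL A (Fl j k) ≠ Fl j' k)
    (hmax : ∀ j j' : Fin m, ∀ A ∈ T, ∀ B ∈ T,
      mapGL A (Fl j k) ≠ mapGL B (Fl j' k) → mapGL A (Fl j k) ⊓ mapGL B (Fl j' k) = ⊥)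
    (hstab : ∀ j : Fin m, ∀ A ∈ T, mapGL A (Fl j k) = Fl j k →
      ∀ i, 1 ≤ i → i ≤ 2 * k - 1 → mapGL A (Fl j i) = Fl j i) :
    (∀ j j' : Fin m, j ≠ j' → Disjoint (orbFlag T (Fl j)) (orbFlag T (Fl j')))
    ∧ (⋃ j : Fin m, orbFlag T (Fl j)).ncard
        = ∑ j : Fin m, {U : Submodule F (Fin (2 * k) → F) | ∃ A ∈ T, U = mapGL A (Fl j k)}.ncard
    ∧ (∀ G ∈ ⋃ j : Fin m, orbFlag T (Fl j), ∀ G' ∈ ⋃ j : Fin m, orbFlag T (Fl j),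
        G ≠ G' → ∑ i : Fin (2 * k - 1), subspaceDist (G i) (G' i) = 2 * k ^ 2) := by
  classical
  have hk1 : 1 ≤ k := hk
  have hkle : k ≤ 2 * k - 1 := by omega
  have hle : ∀ (j : Fin m) {a b : ℕ}, 1 ≤ a → a ≤ b → b ≤ 2 * k - 1 → Fl j a ≤ Fl j b := by
    intro j a b h1 h2 h3
    rcases eq_or_lt_of_le h2 with rfl | h
    · exact le_rfl
    · exact (hmono j a b h1 h h3).le
  have hmidlt : (k - 1 : ℕ) < 2 * k - 1 := by omega
  set mid : Fin (2 * k - 1) := ⟨k - 1, hmidlt⟩ with hmiddef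
  have hmidval : (mid : ℕ) + 1 = k := by simp only [hmiddef]; omega
  -- same orbit class and equal middles ⇒ equal flags
  have coreA : ∀ (j : Fin m) (A B : GL (Fin (2 * k)) F), A ∈ T → B ∈ T →
      mapGL A (Fl j k) = mapGL B (Fl j k) →
      (fun i : Fin (2 * k - 1) => mapGL A (Fl j (i.val + 1)))
        = (fun i : Fin (2 * k - 1) => mapGL B (Fl j (i.val + 1))) := by
    intro j A B hA hB hmid'
    have hC : B⁻¹ * A ∈ T := mul_mem (inv_mem hB) hA
    have h1 : mapGL (B⁻¹ * A) (Fl j k) = Fl j k := by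
      rw [← mapGL_mapGL, hmid', mapGL_mapGL, inv_mul_cancel, mapGL_one]
    funext i
    have hi := i.isLt
    have h2 := hstab j _ hC h1 (i.val + 1) (by omega) (by omega)
    calc mapGL A (Fl j (i.val + 1)) = mapGL (B * (B⁻¹ * A)) (Fl j (i.val + 1)) := by
          rw [mul_inv_cancel_left]
      _ = mapGL B (mapGL (B⁻¹ * A) (Fl j (i.val + 1))) := (mapGL_mapGL _ _ _).symm
      _ = mapGL B (Fl j (i.val + 1)) := by rw [h2]
  -- different classes ⇒ middles always differ
  have coreB : ∀ (j j' : Fin m) (A B : GL (Fin (2 * k)) F), A ∈ T → B ∈ T → j ≠ j' →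
      mapGL A (Fl j k) ≠ mapGL B (Fl j' k) := by
    intro j j' A B hA hB hjj heq
    apply horb j j' hjj (B⁻¹ * A) (mul_mem (inv_mem hB) hA)
    rw [← mapGL_mapGL, heq, mapGL_mapGL, inv_mul_cancel, mapGL_one]
  -- part 1
  have part1 : ∀ j j' : Fin m, j ≠ j' → Disjoint (orbFlag T (Fl j)) (orbFlag T (Fl j')) := by
    intro j j' hjj
    rw [Set.disjoint_left]
    rintro G ⟨A, hA, rfl⟩ ⟨B, hB, hGB⟩
    have hmids : mapGL A (Fl j k) = mapGL B (Fl j' k) := by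
      have h := congrFun hGB mid
      rwa [hmidval] at h
    exact coreB j j' A B hA hB hjj hmids
  -- distance for flags with distinct middles
  have distLem : ∀ (j j' : Fin m) (A B : GL (Fin (2 * k)) F), A ∈ T → B ∈ T →
      mapGL A (Fl j k) ≠ mapGL B (Fl j' k) →
      ∑ i : Fin (2 * k - 1),
        subspaceDist (mapGL A (Fl j (i.val + 1))) (mapGL B (Fl j' (i.val + 1))) = 2 * k ^ 2 := by
    intro j j' A B hA hB hne
    have hbot : mapGL A (Fl j k) ⊓ mapGL B (Fl j' k) = ⊥ := hmax j j' A hA B hB hne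
    have hterm : ∀ i : Fin (2 * k - 1),
        subspaceDist (mapGL A (Fl j (i.val + 1))) (mapGL B (Fl j' (i.val + 1)))
          = if i.val + 1 ≤ k then 2 * (i.val + 1) else 4 * k - 2 * (i.val + 1) := by
      intro i
      have hi := i.isLt
      have hU : finrank F (mapGL A (Fl j (i.val + 1))) = i.val + 1 := by
        rw [mapGL_finrank]; exact hdim j _ (by omega) (by omega)
      have hW : finrank F (mapGL B (Fl j' (i.val + 1))) = i.val + 1 := by
        rw [mapGL_finrank]; exact hdim j' _ (by omega) (by omega)
      by_cases hc : i.val + 1 ≤ k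
      · have h1 : mapGL A (Fl j (i.val + 1)) ≤ mapGL A (Fl j k) :=
          mapGL_mono _ (hle j (by omega) hc hkle)
        have h2 : mapGL B (Fl j' (i.val + 1)) ≤ mapGL B (Fl j' k) :=
          mapGL_mono _ (hle j' (by omega) hc hkle)
        have hinf : mapGL A (Fl j (i.val + 1)) ⊓ mapGL B (Fl j' (i.val + 1)) = ⊥ := by
          rw [← le_bot_iff, ← hbot]; exact inf_le_inf h1 h2
        have hinf0 : finrank F
            ↥(mapGL A (Fl j (i.val + 1)) ⊓ mapGL B (Fl j' (i.val + 1))) = 0 := by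
          rw [hinf]; exact finrank_bot F _
        rw [if_pos hc]
        simp only [subspaceDist]
        omega
      · have h1 : mapGL A (Fl j k) ≤ mapGL A (Fl j (i.val + 1)) :=
          mapGL_mono _ (hle j hk1 (by omega) (by omega))
        have h2 : mapGL B (Fl j' k) ≤ mapGL B (Fl j' (i.val + 1)) :=
          mapGL_mono _ (hle j' hk1 (by omega) (by omega))
        have hXr : finrank F (mapGL A (Fl j k)) = k := by
          rw [mapGL_finrank]; exact hdim j k hk1 hkle
        have hYr : finrank F (mapGL B (Fl j' k)) = k := by
          rw [mapGL_finrank]; exact hdim j' k hk1 hkle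
        have hXY : finrank F ↥(mapGL A (Fl j k) ⊔ mapGL B (Fl j' k)) = 2 * k := by
          have hh := Submodule.finrank_sup_add_finrank_inf_eq
            (mapGL A (Fl j k)) (mapGL B (Fl j' k))
          rw [hbot, finrank_bot, hXr, hYr] at hh
          omega
        have hge := Submodule.finrank_mono (R := F) (sup_le_sup h1 h2)
        rw [hXY] at hge
        have hle2 : finrank F ↥(mapGL A (Fl j (i.val + 1)) ⊔ mapGL B (Fl j' (i.val + 1)))
            ≤ 2 * k := by
          have hh := Submodule.finrank_le
            (mapGL A (Fl j (i.val + 1)) ⊔ mapGL B (Fl j' (i.val + 1)))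
          rwa [Module.finrank_fin_fun] at hh
        have hsum := Submodule.finrank_sup_add_finrank_inf_eq
          (mapGL A (Fl j (i.val + 1))) (mapGL B (Fl j' (i.val + 1)))
        rw [hU, hW] at hsum
        rw [if_neg hc]
        simp only [subspaceDist, hU, hW]
        omega
    calc ∑ i : Fin (2 * k - 1),
          subspaceDist (mapGL A (Fl j (i.val + 1))) (mapGL B (Fl j' (i.val + 1)))
        = ∑ i : Fin (2 * k - 1),
            (if i.val + 1 ≤ k then 2 * (i.val + 1) else 4 * k - 2 * (i.val + 1)) :=
          Finset.sum_congr rfl fun i _ => hterm i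
      _ = ∑ i ∈ Finset.range (2 * k - 1),
            (if i + 1 ≤ k then 2 * (i + 1) else 4 * k - 2 * (i + 1)) :=
          Fin.sum_univ_eq_sum_range
            (fun t => if t + 1 ≤ k then 2 * (t + 1) else 4 * k - 2 * (t + 1)) (2 * k - 1)
      _ = 2 * k ^ 2 := key_sum hk
  refine ⟨part1, ?_, ?_⟩
  · -- cardinality
    have himg : ∀ j : Fin m,
        {U : Submodule F (Fin (2 * k) → F) | ∃ A ∈ T, U = mapGL A (Fl j k)}
          = (fun G : Fin (2 * k - 1) → Submodule F (Fin (2 * k) → F) => G mid)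
              '' orbFlag T (Fl j) := by
      intro j
      ext U
      constructor
      · rintro ⟨A, hA, rfl⟩
        refine ⟨fun i => mapGL A (Fl j (i.val + 1)), ⟨A, hA, rfl⟩, ?_⟩
        simp only
        rw [hmidval]
      · rintro ⟨G, ⟨A, hA, rfl⟩, rfl⟩
        refine ⟨A, hA, ?_⟩
        simp only
        rw [hmidval]
    have hinj : ∀ j : Fin m,
        Set.InjOn (fun G : Fin (2 * k - 1) → Submodule F (Fin (2 * k) → F) => G mid)
          (orbFlag T (Fl j)) := by
      rintro j G ⟨A, hA, rfl⟩ G' ⟨B, hB, rfl⟩ h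
      simp only at h
      rw [hmidval] at h
      exact coreA j A B hA hB h
    have hcard : ∀ j : Fin m,
        {U : Submodule F (Fin (2 * k) → F) | ∃ A ∈ T, U = mapGL A (Fl j k)}.ncard
          = (orbFlag T (Fl j)).ncard := by
      intro j
      rw [himg j, Set.ncard_image_of_injOn (hinj j)]
    rw [ncard_iUnion_of_disjoint _ (fun j => Set.toFinite _) part1]
    exact Finset.sum_congr rfl fun j _ => (hcard j).symm
  · -- distance
    intro G hG G' hG' hne
    rw [Set.mem_iUnion] at hG hG'
    obtain ⟨j, A, hA, rfl⟩ := hG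
    obtain ⟨j', B, hB, rfl⟩ := hG'
    have hmids : mapGL A (Fl j k) ≠ mapGL B (Fl j' k) := by
      by_cases hjj : j = j'
      · subst hjj
        exact fun h => hne (coreA j A B hA hB h)
      · exact coreB j j' A B hA hB hjj
    exact distLem j j' A B hA hB hmids
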